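/- arXiv:1302.6357 — 3 statements merged into one kernel-verified Lean document; each statement's English description precedes it below -/
import Mathlib

section
/- Let V be a vertex operator algebra, M an admissible V-module, and n ≥ 0. Then V *_n O_n(M) ⊆ O_n(M) and O_n(M) *_n V ⊆ O_n(M); in particular the quotient 𝔸_n(M) = M / O_n(M) carries well-defined left and right actions of V. -/
open Finset

/-- The generalized binomial coefficient `C(a, i)` for `a : ℤ`, as a complex number. -/
noncomputable def zchoose (a : ℤ) (i : ℕ) : ℂ := ((Ring.choose a i : ℤ) : ℂ)

variable {V M : Type*} [AddCommGroup V] [Module ℂ V] [AddCommGroup M] [Module ℂ M]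

/-- `u ∘ₙ w = Res_z Y(u,z)w (1+z)^{d+n}/z^{2n+2}` for `u` homogeneous of weight `d`. -/
noncomputable def circn (Y : V →ₗ[ℂ] ℤ → M →ₗ[ℂ] M) (n : ℕ) (d : ℤ) (u : V) (w : M) : M :=
  ∑ᶠ i : ℕ, zchoose (d + n) i • Y u ((i : ℤ) - 2 * n - 2) w

/-- `O_n(M)`: the span of all `u ∘ₙ w` for `u` homogeneous and `w ∈ M`. -/
noncomputable def On (Y : V →ₗ[ℂ] ℤ → M →ₗ[ℂ] M) (gr : ℤ → Submodule ℂ V) (n : ℕ) :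
    Submodule ℂ M :=
  Submodule.span ℂ {x | ∃ (d : ℤ) (u : V) (w : M), u ∈ gr d ∧ x = circn Y n d u w}

/-- The left product
`u *ₙ w = ∑_{m=0}^n (-1)^m C(m+n,n) Res_z Y(u,z)w (1+z)^{d+n}/z^{n+m+1}`
for `u` homogeneous of weight `d`. -/
noncomputable def lstar (Y : V →ₗ[ℂ] ℤ → M →ₗ[ℂ] M) (n : ℕ) (d : ℤ) (u : V) (w : M) : M :=
  ∑ m ∈ range (n + 1), ∑ᶠ i : ℕ,
    ((-1 : ℂ) ^ m * ((m + n).choose n : ℂ) * zchoose (d + n) i) •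
      Y u ((i : ℤ) - m - n - 1) w

/-- The right product
`w *ₙ u = ∑_{m=0}^n (-1)^m C(m+n,n) Res_z Y(u,z)w (1+z)^{d+m-1}/z^{n+m+1}`
for `u` homogeneous of weight `d`. -/
noncomputable def rstar (Y : V →ₗ[ℂ] ℤ → M →ₗ[ℂ] M) (n : ℕ) (d : ℤ) (u : V) (w : M) : M :=
  ∑ m ∈ range (n + 1), ∑ᶠ i : ℕ,
    ((-1 : ℂ) ^ m * ((m + n).choose n : ℂ) * zchoose (d + m - 1) i) •
      Y u ((i : ℤ) - m - n - 1) w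



lemma zchoose_zero (a : ℤ) : zchoose a 0 = 1 := by
  simp [zchoose, Ring.choose_zero_right]

lemma zchoose_zero_left (i : ℕ) (hi : i ≠ 0) : zchoose 0 i = 0 := by
  simp [zchoose, Ring.choose_zero_pos ℤ (Nat.pos_of_ne_zero hi)]

lemma zchoose_natCast (j i : ℕ) : zchoose (j : ℤ) i = (j.choose i : ℂ) := by
  simp [zchoose, Ring.choose_natCast]

lemma zchoose_pascal (a : ℤ) (i : ℕ) :
    zchoose (a + 1) (i + 1) = zchoose a (i + 1) + zchoose a i := by
  have := Ring.choose_succ_succ a i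
  simp only [zchoose]
  rw [this]; push_cast; ring

lemma zchoose_absorb (a : ℤ) (i : ℕ) :
    ((i : ℂ) + 1) * zchoose a (i + 1) = (a : ℂ) * zchoose (a - 1) i := by
  have h := Ring.choose_smul_choose a (n := i + 1) (k := 1) (Nat.le_add_left 1 i)
  rw [Nat.choose_one_right, Ring.choose_one_right, nsmul_eq_mul] at h
  simp only [Nat.add_sub_cancel, Nat.cast_one] at h
  have : ((i + 1 : ℤ) * Ring.choose a (i+1) : ℤ) = a * Ring.choose (a - 1) i := by
    push_cast at h ⊢; exact_mod_cast h
  simp only [zchoose]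
  exact_mod_cast congrArg (Int.cast : ℤ → ℂ) this

lemma zchoose_vandermonde (x y : ℤ) (s : ℕ) :
    zchoose (x + y) s = ∑ j ∈ range (s + 1), zchoose x j * zchoose y (s - j) := by
  have h := Ring.add_choose_eq s (Commute.all x y)
  rw [Finset.Nat.sum_antidiagonal_eq_sum_range_succ_mk] at h
  simp only [zchoose]
  rw [h]; push_cast; rfl

lemma zchoose_trinomial (c : ℤ) (a j : ℕ) (h : a ≤ j) :
    zchoose c a * zchoose (c - a) (j - a) = zchoose c j * zchoose (j : ℤ) a := by
  have h2 := Ring.choose_smul_choose c (n := j) (k := a) h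
  rw [nsmul_eq_mul] at h2
  have h3 : (Ring.choose c a * Ring.choose (c - (a:ℤ)) (j - a) : ℤ)
      = Ring.choose c j * (j.choose a : ℤ) := by rw [← h2]; ring
  rw [zchoose_natCast]
  simp only [zchoose]
  exact_mod_cast congrArg (Int.cast : ℤ → ℂ) h3

lemma zchoose_I1 (c r : ℤ) (j i : ℕ) :
    zchoose c j * zchoose ((j : ℤ) + r) i =
      ∑ a ∈ range (i + 1), zchoose c a * zchoose r (i - a) *
        (if a ≤ j then zchoose (c - a) (j - a) else 0) := by
  have key : ∀ a : ℕ, zchoose c a * zchoose r (i - a) *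
      (if a ≤ j then zchoose (c - a) (j - a) else 0)
      = zchoose c j * (zchoose (j : ℤ) a * zchoose r (i - a)) := by
    intro a
    by_cases haj : a ≤ j
    · rw [if_pos haj]
      rw [mul_right_comm, zchoose_trinomial c a j haj]; ring
    · rw [if_neg haj]
      have : zchoose (j : ℤ) a = 0 := by
        rw [zchoose_natCast, Nat.choose_eq_zero_of_lt (by omega)]; simp
      rw [this]; ring
  simp only [key]
  rw [← Finset.mul_sum, ← zchoose_vandermonde]

section Infra

lemma finsum_eq_range {α : Type*} [AddCommMonoid α] {g : ℕ → α} (N : ℕ)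
    (h : ∀ i, N ≤ i → g i = 0) : ∑ᶠ i, g i = ∑ i ∈ range N, g i := by
  apply finsum_eq_finset_sum_of_support_subset
  intro i hi
  simp only [Function.mem_support] at hi
  simp only [coe_range, Set.mem_Iio]
  by_contra hc
  exact hi (h i (by omega))

variable {V M : Type*} [AddCommGroup V] [Module ℂ V] [AddCommGroup M] [Module ℂ M]
variable (Y : V →ₗ[ℂ] ℤ → M →ₗ[ℂ] M)

/-- `Res_z Y(u,z)w (1+z)^c / z^b`. -/
noncomputable def FS (u : V) (c b : ℤ) (w : M) : M :=
  ∑ᶠ i : ℕ, zchoose c i • Y u ((i : ℤ) - b) w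

lemma FS_eq_range {u : V} {c b : ℤ} {w : M} {N : ℕ}
    (h : ∀ i : ℕ, N ≤ i → Y u ((i : ℤ) - b) w = 0) :
    FS Y u c b w = ∑ i ∈ range N, zchoose c i • Y u ((i : ℤ) - b) w :=
  finsum_eq_range N (fun i hi => by rw [h i hi, smul_zero])

lemma FS_congr {u : V} {w : M} {c c' b b' : ℤ} (hc : c = c') (hb : b = b') :
    FS Y u c b w = FS Y u c' b' w := by rw [hc, hb]

lemma hbnd (htr : ∀ (u : V) (w : M), ∃ K : ℕ, ∀ i : ℤ, (K : ℤ) ≤ i → Y u i w = 0)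
    (u : V) (w : M) (b : ℤ) :
    ∃ N : ℕ, ∀ t : ℤ, (N : ℤ) ≤ t → Y u (t - b) w = 0 := by
  obtain ⟨K, hK⟩ := htr u w
  refine ⟨(K + b).toNat, fun t ht => hK _ ?_⟩
  have := Int.self_le_toNat (K + b)
  omega

lemma circn_eq_FS (n : ℕ) (d : ℤ) (u : V) (w : M) :
    circn Y n d u w = FS Y u (d + n) (2 * (n : ℤ) + 2) w := by
  unfold circn FS
  apply finsum_congr; intro i
  rw [sub_sub]

lemma circn_mem_On (gr : ℤ → Submodule ℂ V) (n : ℕ) {d : ℤ} {u : V} (w : M) (hu : u ∈ gr d) :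
    circn Y n d u w ∈ On Y gr n :=
  Submodule.subset_span ⟨d, u, w, hu, rfl⟩

lemma FS_mem_On (gr : ℤ → Submodule ℂ V) (n : ℕ) {d : ℤ} {u : V} (w : M) (hu : u ∈ gr d) :
    FS Y u (d + n) (2 * (n : ℤ) + 2) w ∈ On Y gr n := by
  rw [← circn_eq_FS]
  exact circn_mem_On Y gr n w hu

lemma FS_pascal (htr : ∀ (u : V) (w : M), ∃ K : ℕ, ∀ i : ℤ, (K : ℤ) ≤ i → Y u i w = 0)
    (u : V) (w : M) (c b : ℤ) :
    FS Y u (c + 1) b w = FS Y u c b w + FS Y u c (b - 1) w := by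
  obtain ⟨N, hN⟩ := hbnd Y htr u w b
  set g : ℕ → M := fun i => Y u ((i : ℤ) - b) w with hg
  have hgz : ∀ i : ℕ, N ≤ i → g i = 0 := fun i hi => hN i (by exact_mod_cast hi)
  have e1 : FS Y u (c + 1) b w = ∑ i ∈ range (N + 1), zchoose (c + 1) i • g i :=
    FS_eq_range Y (fun i hi => hgz i (by omega))
  have e2 : FS Y u c b w = ∑ i ∈ range (N + 1), zchoose c i • g i :=
    FS_eq_range Y (fun i hi => hgz i (by omega))
  have hvan : ∀ i : ℕ, N ≤ i → Y u ((i : ℤ) - (b - 1)) w = 0 := by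
    intro i hi
    have := hN ((i : ℤ) + 1) (by omega)
    rw [show (i : ℤ) - (b - 1) = (i : ℤ) + 1 - b by ring]
    exact this
  have e3 : FS Y u c (b - 1) w = ∑ i ∈ range N, zchoose c i • g (i + 1) := by
    rw [FS_eq_range Y hvan]
    refine Finset.sum_congr rfl (fun i _ => ?_)
    congr 1
    show Y u ((i : ℤ) - (b - 1)) w = Y u (((i + 1 : ℕ) : ℤ) - b) w
    congr 1
    push_cast; ring
  rw [e1, e2, e3]
  rw [Finset.sum_range_succ' (fun i => zchoose (c + 1) i • g i) N,
      Finset.sum_range_succ' (fun i => zchoose c i • g i) N]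
  have : ∀ i, zchoose (c + 1) (i + 1) • g (i + 1)
      = zchoose c (i + 1) • g (i + 1) + zchoose c i • g (i + 1) := fun i => by
    rw [zchoose_pascal, add_smul]
  simp only [this]
  rw [Finset.sum_add_distrib]
  simp only [zchoose_zero, one_smul]
  abel

end Infra

section LemD

variable {V M : Type*} [AddCommGroup V] [Module ℂ V] [AddCommGroup M] [Module ℂ M]
variable (Y : V →ₗ[ℂ] ℤ → M →ₗ[ℂ] M) (YV : V →ₗ[ℂ] ℤ → V →ₗ[ℂ] V)
variable (gr : ℤ → Submodule ℂ V) (ω : V) (n : ℕ)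

lemma lemD
    (htr : ∀ (u : V) (w : M), ∃ K : ℕ, ∀ i : ℤ, (K : ℤ) ≤ i → Y u i w = 0)
    (hgr : ∀ (d e : ℤ) (u v : V), u ∈ gr d → v ∈ gr e → ∀ i : ℤ, YV u i v ∈ gr (d + e - i - 1))
    (hω : ω ∈ gr 2)
    (hL1der : ∀ (u : V) (i : ℤ) (w : M), Y (YV ω 0 u) i w = (-(i : ℂ)) • Y u (i - 1) w) :
    ∀ (k : ℕ) (d : ℤ) (u : V) (w : M), u ∈ gr d →
      FS Y u (d + n + k) (2 * (n : ℤ) + 2 + k) w ∈ On Y gr n := by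
  intro k
  induction k with
  | zero =>
    intro d u w hu
    rw [FS_congr Y (show d + (n : ℤ) + ((0 : ℕ) : ℤ) = d + n by push_cast; ring)
      (show 2 * (n : ℤ) + 2 + ((0 : ℕ) : ℤ) = 2 * (n : ℤ) + 2 by push_cast; ring)]
    exact FS_mem_On Y gr n w hu
  | succ k IH =>
    intro d u w hu
    have hu' : YV ω 0 u ∈ gr (d + 1) := by
      have h := hgr 2 d ω u hω hu 0
      rwa [show (2 + d - 0 - 1 : ℤ) = d + 1 by ring] at h
    obtain ⟨N0, hN0⟩ := hbnd Y htr u w (2 * (n : ℤ) + 3 + k)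
    set a : ℤ := d + n + k with ha
    set g : ℕ → M := fun i => Y u ((i : ℤ) - (2 * (n : ℤ) + 3 + (k : ℤ))) w with hg
    have hgz : ∀ i : ℕ, N0 ≤ i → g i = 0 := fun i hi => hN0 i (by exact_mod_cast hi)
    have eA : FS Y u (a + 1) (2 * (n : ℤ) + 3 + k) w
        = ∑ i ∈ range (N0 + 1), zchoose (a + 1) i • g i :=
      FS_eq_range Y (fun i hi => hgz i (by omega))
    have hvanB : ∀ i : ℕ, N0 + 1 ≤ i → Y u ((i : ℤ) - (2 * (n : ℤ) + 2 + (k : ℤ))) w = 0 := by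
      intro i hi
      have := hN0 ((i : ℤ) + 1) (by omega)
      rw [show (i : ℤ) - (2 * (n : ℤ) + 2 + (k : ℤ))
        = (i : ℤ) + 1 - (2 * (n : ℤ) + 3 + (k : ℤ)) by ring]
      exact this
    have eB : FS Y u a (2 * (n : ℤ) + 2 + k) w
        = ∑ i ∈ range (N0 + 1), zchoose a i • g (i + 1) := by
      rw [FS_eq_range Y hvanB]
      refine Finset.sum_congr rfl (fun i _ => ?_)
      congr 1
      show Y u ((i : ℤ) - (2 * (n : ℤ) + 2 + (k : ℤ))) w
        = Y u (((i + 1 : ℕ) : ℤ) - (2 * (n : ℤ) + 3 + (k : ℤ))) w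
      congr 1
      push_cast; ring
    have hvanC : ∀ i : ℕ, N0 + 1 ≤ i →
        Y (YV ω 0 u) ((i : ℤ) - (2 * (n : ℤ) + 2 + (k : ℤ))) w = 0 := by
      intro i hi
      rw [hL1der u _ w,
        show (i : ℤ) - (2 * (n : ℤ) + 2 + (k : ℤ)) - 1
          = (i : ℤ) - (2 * (n : ℤ) + 3 + (k : ℤ)) by ring,
        hN0 i (by omega), smul_zero]
    have eC : FS Y (YV ω 0 u) (a + 1) (2 * (n : ℤ) + 2 + k) w
        = ∑ i ∈ range (N0 + 1), ((2 * (n : ℂ) + 2 + k - i) * zchoose (a + 1) i) • g i := by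
      rw [FS_eq_range Y hvanC]
      refine Finset.sum_congr rfl (fun i _ => ?_)
      rw [hL1der u ((i : ℤ) - (2 * (n : ℤ) + 2 + (k : ℤ))) w, smul_smul]
      congr 1
      · push_cast; ring
      · show Y u ((i : ℤ) - (2 * (n : ℤ) + 2 + (k : ℤ)) - 1) w = g i
        rw [hg]
        show Y u _ w = Y u _ w
        congr 1
        ring
    have hS2 : ∑ i ∈ range (N0 + 1), ((i : ℂ) * zchoose (a + 1) i) • g i
        = ((a : ℂ) + 1) • ∑ i ∈ range (N0 + 1), zchoose a i • g (i + 1) := by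
      rw [Finset.sum_range_succ' (fun i => ((i : ℂ) * zchoose (a + 1) i) • g i) N0,
        Finset.sum_range_succ (fun i => zchoose a i • g (i + 1)) N0,
        hgz (N0 + 1) (by omega), smul_zero, add_zero]
      simp only [Nat.cast_zero, zero_mul, zero_smul, add_zero]
      rw [Finset.smul_sum]
      refine Finset.sum_congr rfl (fun i _ => ?_)
      rw [smul_smul]
      congr 1
      have habs := zchoose_absorb (a + 1) i
      rw [show (a + 1 - 1 : ℤ) = a by ring] at habs
      push_cast at habs ⊢
      linear_combination habs
    have hmem1 : (∑ i ∈ range (N0 + 1), ((2 * (n : ℂ) + 2 + k - i) * zchoose (a + 1) i) • g i)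
        ∈ On Y gr n := by
      rw [← eC]
      rw [FS_congr Y (show a + 1 = (d + 1) + (n : ℤ) + (k : ℤ) by rw [ha]; ring) rfl]
      exact IH (d + 1) (YV ω 0 u) w hu'
    have hmem2 : (∑ i ∈ range (N0 + 1), zchoose a i • g (i + 1)) ∈ On Y gr n := by
      rw [← eB]
      exact IH d u w hu
    have esplit : ∑ i ∈ range (N0 + 1), ((2 * (n : ℂ) + 2 + k - i) * zchoose (a + 1) i) • g i
        = (2 * (n : ℂ) + 2 + k) • (∑ i ∈ range (N0 + 1), zchoose (a + 1) i • g i)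
          - ((a : ℂ) + 1) • (∑ i ∈ range (N0 + 1), zchoose a i • g (i + 1)) := by
      rw [← hS2, Finset.smul_sum, ← Finset.sum_sub_distrib]
      refine Finset.sum_congr rfl (fun i _ => ?_)
      rw [smul_smul, ← sub_smul]
      congr 1
      ring
    have hA : (2 * (n : ℂ) + 2 + k) • (∑ i ∈ range (N0 + 1), zchoose (a + 1) i • g i)
        ∈ On Y gr n := by
      have h2 : (2 * (n : ℂ) + 2 + k) • (∑ i ∈ range (N0 + 1), zchoose (a + 1) i • g i)
          = (∑ i ∈ range (N0 + 1), ((2 * (n : ℂ) + 2 + k - i) * zchoose (a + 1) i) • g i)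
            + ((a : ℂ) + 1) • (∑ i ∈ range (N0 + 1), zchoose a i • g (i + 1)) := by
        rw [esplit]; abel
      rw [h2]
      exact Submodule.add_mem _ hmem1 (Submodule.smul_mem _ _ hmem2)
    have hne : (2 * (n : ℂ) + 2 + (k : ℂ)) ≠ 0 := by
      have : (2 * (n : ℂ) + 2 + (k : ℂ)) = ((2 * n + 2 + k : ℕ) : ℂ) := by push_cast; ring
      rw [this]
      simp only [ne_eq, Nat.cast_eq_zero]
      omega
    have hA' : (∑ i ∈ range (N0 + 1), zchoose (a + 1) i • g i) ∈ On Y gr n := by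
      have := Submodule.smul_mem _ (2 * (n : ℂ) + 2 + (k : ℂ))⁻¹ hA
      rwa [inv_smul_smul₀ hne] at this
    rw [FS_congr Y (show d + (n : ℤ) + ((k + 1 : ℕ) : ℤ) = a + 1 by rw [ha]; push_cast; ring)
      (show 2 * (n : ℤ) + 2 + ((k + 1 : ℕ) : ℤ) = 2 * (n : ℤ) + 3 + (k : ℤ) by push_cast; ring),
      eA]
    exact hA'

lemma lemA
    (htr : ∀ (u : V) (w : M), ∃ K : ℕ, ∀ i : ℤ, (K : ℤ) ≤ i → Y u i w = 0)
    (hgr : ∀ (d e : ℤ) (u v : V), u ∈ gr d → v ∈ gr e → ∀ i : ℤ, YV u i v ∈ gr (d + e - i - 1))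
    (hω : ω ∈ gr 2)
    (hL1der : ∀ (u : V) (i : ℤ) (w : M), Y (YV ω 0 u) i w = (-(i : ℂ)) • Y u (i - 1) w) :
    ∀ (t k : ℕ) (d c : ℤ) (u : V) (w : M), u ∈ gr d → t ≤ k → c = d + n + k - t →
      FS Y u c (2 * (n : ℤ) + 2 + k) w ∈ On Y gr n := by
  intro t
  induction t with
  | zero =>
    intro k d c u w hu _ hc
    rw [FS_congr Y (show c = d + (n : ℤ) + (k : ℤ) by push_cast at hc; omega) rfl]
    exact lemD Y YV gr ω n htr hgr hω hL1der k d u w hu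
  | succ t IH =>
    intro k d c u w hu htk hc
    obtain ⟨k', rfl⟩ : ∃ k', k = k' + 1 := ⟨k - 1, by omega⟩
    have h1 : FS Y u (c + 1) (2 * (n : ℤ) + 2 + ((k' + 1 : ℕ) : ℤ)) w ∈ On Y gr n :=
      IH (k' + 1) d (c + 1) u w hu (by omega) (by push_cast at hc ⊢; omega)
    have h2 : FS Y u c (2 * (n : ℤ) + 2 + ((k' : ℕ) : ℤ)) w ∈ On Y gr n :=
      IH k' d c u w hu (by omega) (by push_cast at hc ⊢; omega)
    have hp := FS_pascal Y htr u w c (2 * (n : ℤ) + 2 + ((k' + 1 : ℕ) : ℤ))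
    have hkey : FS Y u c (2 * (n : ℤ) + 2 + ((k' + 1 : ℕ) : ℤ)) w
        = FS Y u (c + 1) (2 * (n : ℤ) + 2 + ((k' + 1 : ℕ) : ℤ)) w
          - FS Y u c (2 * (n : ℤ) + 2 + ((k' + 1 : ℕ) : ℤ) - 1) w := by
      rw [hp]; abel
    rw [hkey, FS_congr Y rfl (show 2 * (n : ℤ) + 2 + ((k' + 1 : ℕ) : ℤ) - 1
      = 2 * (n : ℤ) + 2 + ((k' : ℕ) : ℤ) by push_cast; ring)]
    exact Submodule.sub_mem _ h1 h2

lemma lemA'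
    (htr : ∀ (u : V) (w : M), ∃ K : ℕ, ∀ i : ℤ, (K : ℤ) ≤ i → Y u i w = 0)
    (hgr : ∀ (d e : ℤ) (u v : V), u ∈ gr d → v ∈ gr e → ∀ i : ℤ, YV u i v ∈ gr (d + e - i - 1))
    (hω : ω ∈ gr 2)
    (hL1der : ∀ (u : V) (i : ℤ) (w : M), Y (YV ω 0 u) i w = (-(i : ℂ)) • Y u (i - 1) w)
    {d : ℤ} {u : V} (hu : u ∈ gr d) (w : M) (c : ℤ) (k : ℕ)
    (h1 : d + n ≤ c) (h2 : c ≤ d + n + k) :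
    FS Y u c (2 * (n : ℤ) + 2 + k) w ∈ On Y gr n := by
  obtain ⟨t, ht1, ht2⟩ : ∃ t : ℕ, (t : ℤ) = d + n + k - c ∧ t ≤ k :=
    ⟨(d + n + k - c).toNat, by omega⟩
  exact lemA Y YV gr ω n htr hgr hω hL1der t k d c u w hu ht2 (by omega)

end LemD

section LemG

variable {V M : Type*} [AddCommGroup V] [Module ℂ V] [AddCommGroup M] [Module ℂ M]
variable (Y : V →ₗ[ℂ] ℤ → M →ₗ[ℂ] M) (YV : V →ₗ[ℂ] ℤ → V →ₗ[ℂ] V)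
variable (gr : ℤ → Submodule ℂ V) (ω : V) (n : ℕ)

lemma merge (u' : V) (x : M) (c1 c2 B : ℤ) (N : ℕ)
    (hg : ∀ t : ℕ, N ≤ t → Y u' ((t : ℤ) - B) x = 0) :
    ∑ j ∈ range N, ∑ l ∈ range N,
        (zchoose c1 j * zchoose c2 l) • Y u' ((j : ℤ) + (l : ℤ) - B) x
      = ∑ s ∈ range N, zchoose (c1 + c2) s • Y u' ((s : ℤ) - B) x := by
  have hterm : ∀ j ∈ range N, ∀ l ∈ range N,
      (zchoose c1 j * zchoose c2 l) • Y u' ((j : ℤ) + (l : ℤ) - B) x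
      = ∑ s ∈ range N, (if s = j + l then zchoose c1 j * zchoose c2 l else 0) •
          Y u' ((s : ℤ) - B) x := by
    intro j _ l _
    have hrw : ∑ s ∈ range N, (if s = j + l then zchoose c1 j * zchoose c2 l else 0) •
          Y u' ((s : ℤ) - B) x
        = ∑ s ∈ range N, (if s = j + l then (zchoose c1 j * zchoose c2 l) •
            Y u' ((s : ℤ) - B) x else 0) :=
      Finset.sum_congr rfl (fun s _ => by rw [ite_smul, zero_smul])
    rw [hrw, Finset.sum_ite_eq' (range N) (j + l)
      (fun s => (zchoose c1 j * zchoose c2 l) • Y u' ((s : ℤ) - B) x)]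
    have hidx : (j : ℤ) + (l : ℤ) - B = ((j + l : ℕ) : ℤ) - B := by push_cast; ring
    by_cases hjl : j + l ∈ range N
    · rw [if_pos hjl, hidx]
    · rw [if_neg hjl, hidx, hg (j + l) (by simpa using hjl), smul_zero]
  rw [Finset.sum_congr rfl (fun j hj => Finset.sum_congr rfl (hterm j hj))]
  have swap1 : ∀ j ∈ range N,
      ∑ l ∈ range N, ∑ s ∈ range N, (if s = j + l then zchoose c1 j * zchoose c2 l else 0) •
          Y u' ((s : ℤ) - B) x
      = ∑ s ∈ range N, ∑ l ∈ range N, (if s = j + l then zchoose c1 j * zchoose c2 l else 0) •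
          Y u' ((s : ℤ) - B) x := fun j _ => Finset.sum_comm
  rw [Finset.sum_congr rfl swap1, Finset.sum_comm]
  refine Finset.sum_congr rfl (fun s hs => ?_)
  have hs' : s < N := mem_range.mp hs
  have hpull : ∀ j ∈ range N,
      ∑ l ∈ range N, (if s = j + l then zchoose c1 j * zchoose c2 l else 0) •
          Y u' ((s : ℤ) - B) x
      = (∑ l ∈ range N, if s = j + l then zchoose c1 j * zchoose c2 l else 0) •
          Y u' ((s : ℤ) - B) x := fun j _ => (Finset.sum_smul).symm
  rw [Finset.sum_congr rfl hpull, ← Finset.sum_smul]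
  congr 1
  -- bring to single coefficient : ∑_j ∑_l ite = zchoose (c1+c2) s
  have hj2 : ∀ j ∈ range N,
      (∑ l ∈ range N, if s = j + l then zchoose c1 j * zchoose c2 l else 0)
      = if j ≤ s then zchoose c1 j * zchoose c2 (s - j) else 0 := by
    intro j _
    by_cases hjs : j ≤ s
    · rw [if_pos hjs]
      have hcond : ∀ l : ℕ, (s = j + l) ↔ (l = s - j) := fun l => by omega
      simp only [hcond]
      rw [Finset.sum_ite_eq' (range N) (s - j) (fun l => zchoose c1 j * zchoose c2 l)]
      rw [if_pos (mem_range.mpr (by omega))]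
    · rw [if_neg hjs]
      refine Finset.sum_eq_zero (fun l _ => ?_)
      rw [if_neg (by omega)]
  have hsum2 : ∀ j ∈ range N, (fun jl => ∑ l ∈ range N,
      if s = jl + l then zchoose c1 jl * zchoose c2 l else 0) j
      = (fun jl => if jl ≤ s then zchoose c1 jl * zchoose c2 (s - jl) else 0) j := hj2
  rw [show (∑ j ∈ range N, ∑ l ∈ range N,
      if s = j + l then zchoose c1 j * zchoose c2 l else 0)
    = ∑ j ∈ range N, if j ≤ s then zchoose c1 j * zchoose c2 (s - j) else 0 from
    Finset.sum_congr rfl hj2]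
  have hext : ∑ j ∈ range N, (if j ≤ s then zchoose c1 j * zchoose c2 (s - j) else 0)
      = ∑ j ∈ range (s + 1), (if j ≤ s then zchoose c1 j * zchoose c2 (s - j) else 0) := by
    symm
    refine Finset.sum_subset (Finset.range_subset_range.mpr (by omega)) (fun j _ hj => ?_)
    rw [if_neg (by simp only [mem_range] at hj; omega)]
  rw [hext]
  have : ∑ j ∈ range (s + 1), (if j ≤ s then zchoose c1 j * zchoose c2 (s - j) else 0)
      = ∑ j ∈ range (s + 1), zchoose c1 j * zchoose c2 (s - j) :=
    Finset.sum_congr rfl (fun j hj => if_pos (by simp only [mem_range] at hj; omega))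
  rw [this, ← zchoose_vandermonde]

lemma comm_formula
    (hB : ∀ (u v : V) (w : M) (p q r : ℤ),
      (∑ᶠ i : ℕ, zchoose p i • Y (YV u (r + i) v) (p + q - i) w)
        = (∑ᶠ i : ℕ, ((-1 : ℂ) ^ i * zchoose r i) • Y u (p + r - i) (Y v (q + i) w))
          - ∑ᶠ i : ℕ, ((-1 : ℂ) ^ i * zchoose r i * (-1 : ℂ) ^ r) •
              Y v (q + r - i) (Y u (p + i) w))
    (u v : V) (x : M) (K : ℕ) (hK : ∀ i : ℕ, K ≤ i → YV u (i : ℤ) v = 0) (p q : ℤ) :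
    Y u p (Y v q x) = Y v q (Y u p x)
      + ∑ i ∈ range K, zchoose p i • Y (YV u (i : ℤ) v) (p + q - i) x := by
  have h := hB u v x p q 0
  simp only [zero_add, add_zero, zpow_zero, mul_one] at h
  have e1 : (∑ᶠ i : ℕ, zchoose p i • Y (YV u (i : ℤ) v) (p + q - i) x)
      = ∑ i ∈ range K, zchoose p i • Y (YV u (i : ℤ) v) (p + q - i) x := by
    refine finsum_eq_range K (fun i hi => ?_)
    rw [hK i hi]
    simp only [map_zero, LinearMap.zero_apply, Pi.zero_apply, smul_zero]
  have e2 : (∑ᶠ i : ℕ, ((-1 : ℂ) ^ i * zchoose (0 : ℤ) i) • Y u (p - i) (Y v (q + i) x))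
      = Y u p (Y v q x) := by
    rw [finsum_eq_range 1 (fun i hi => by
      rw [zchoose_zero_left i (by omega), mul_zero, zero_smul])]
    simp [zchoose_zero]
  have e3 : (∑ᶠ i : ℕ, ((-1 : ℂ) ^ i * zchoose (0 : ℤ) i) • Y v (q - i) (Y u (p + i) x))
      = Y v q (Y u p x) := by
    rw [finsum_eq_range 1 (fun i hi => by
      rw [zchoose_zero_left i (by omega), mul_zero, zero_smul])]
    simp [zchoose_zero]
  rw [e1, e2, e3] at h
  rw [h]
  abel

end LemG

section LemGmain

variable {V M : Type*} [AddCommGroup V] [Module ℂ V] [AddCommGroup M] [Module ℂ M]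
variable (Y : V →ₗ[ℂ] ℤ → M →ₗ[ℂ] M) (YV : V →ₗ[ℂ] ℤ → V →ₗ[ℂ] V)
variable (gr : ℤ → Submodule ℂ V) (ω : V) (n : ℕ)

lemma lemG
    (htr : ∀ (u : V) (w : M), ∃ K : ℕ, ∀ i : ℤ, (K : ℤ) ≤ i → Y u i w = 0)
    (htrV : ∀ u v : V, ∃ K : ℕ, ∀ i : ℤ, (K : ℤ) ≤ i → YV u i v = 0)
    (hgr : ∀ (d e : ℤ) (u v : V), u ∈ gr d → v ∈ gr e → ∀ i : ℤ, YV u i v ∈ gr (d + e - i - 1))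
    (hω : ω ∈ gr 2)
    (hL1der : ∀ (u : V) (i : ℤ) (w : M), Y (YV ω 0 u) i w = (-(i : ℂ)) • Y u (i - 1) w)
    (hB : ∀ (u v : V) (w : M) (p q r : ℤ),
      (∑ᶠ i : ℕ, zchoose p i • Y (YV u (r + i) v) (p + q - i) w)
        = (∑ᶠ i : ℕ, ((-1 : ℂ) ^ i * zchoose r i) • Y u (p + r - i) (Y v (q + i) w))
          - ∑ᶠ i : ℕ, ((-1 : ℂ) ^ i * zchoose r i * (-1 : ℂ) ^ r) •
              Y v (q + r - i) (Y u (p + i) w))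
    (d e : ℤ) (u v : V) (x : M) (hu : u ∈ gr d) (hv : v ∈ gr e)
    (P : ℕ) (c : ℤ) (hc1 : d - 1 ≤ c) (hc2 : c ≤ d + (P : ℤ) - 1) :
    FS Y u c (P : ℤ) (circn Y n e v x) ∈ On Y gr n := by
  obtain ⟨K, hK⟩ := htrV u v
  have hKn : ∀ i : ℕ, K ≤ i → YV u (i : ℤ) v = 0 := fun i hi => hK i (by exact_mod_cast hi)
  set W := circn Y n e v x with hW
  set x' := FS Y u c (P : ℤ) x with hx'
  obtain ⟨N1, hN1⟩ := hbnd Y htr u W (P : ℤ)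
  obtain ⟨N2, hN2⟩ := hbnd Y htr v x (2 * (n : ℤ) + 2)
  obtain ⟨N3, hN3⟩ := hbnd Y htr v x' (2 * (n : ℤ) + 2)
  obtain ⟨N5, hN5⟩ := hbnd Y htr u x (P : ℤ)
  have hN4ex : ∀ i : ℕ, ∃ N : ℕ, ∀ t : ℤ, (N : ℤ) ≤ t →
      Y (YV u (i : ℤ) v) (t - ((P : ℤ) + 2 * (n : ℤ) + 2 + (i : ℤ))) x = 0 :=
    fun i => hbnd Y htr (YV u (i : ℤ) v) x _
  choose N4 hN4 using hN4ex
  set Nb := (range K).sup N4 with hNb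
  set N := max (max (max N1 N2) (max N3 N5)) Nb with hNdef
  have hvW : ∀ j : ℕ, N ≤ j → Y u ((j : ℤ) - (P : ℤ)) W = 0 := fun j hj => hN1 j (by omega)
  have hvx : ∀ j : ℕ, N ≤ j → Y u ((j : ℤ) - (P : ℤ)) x = 0 := fun j hj => hN5 j (by omega)
  have hv2 : ∀ l : ℕ, N ≤ l → Y v ((l : ℤ) - (2 * (n : ℤ) + 2)) x = 0 := fun l hl =>
    hN2 l (by omega)
  have hv3 : ∀ l : ℕ, N ≤ l → Y v ((l : ℤ) - (2 * (n : ℤ) + 2)) x' = 0 := fun l hl =>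
    hN3 l (by omega)
  have hv4 : ∀ i : ℕ, i < K → ∀ t : ℤ, (N : ℤ) ≤ t →
      Y (YV u (i : ℤ) v) (t - ((P : ℤ) + 2 * (n : ℤ) + 2 + (i : ℤ))) x = 0 := by
    intro i hi t ht
    have hle : N4 i ≤ Nb := Finset.le_sup (mem_range.mpr hi)
    exact hN4 i t (by omega)
  -- the three pieces
  have hS1mem : (∑ j ∈ range N, ∑ l ∈ range N, (zchoose c j * zchoose (e + n) l) •
      Y v ((l : ℤ) - (2 * (n : ℤ) + 2)) (Y u ((j : ℤ) - (P : ℤ)) x)) ∈ On Y gr n := by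
    have hswap : ∑ j ∈ range N, ∑ l ∈ range N, (zchoose c j * zchoose (e + n) l) •
        Y v ((l : ℤ) - (2 * (n : ℤ) + 2)) (Y u ((j : ℤ) - (P : ℤ)) x)
        = ∑ l ∈ range N, zchoose (e + n) l • Y v ((l : ℤ) - (2 * (n : ℤ) + 2)) x' := by
      rw [Finset.sum_comm]
      refine Finset.sum_congr rfl (fun l _ => ?_)
      rw [hx', FS_eq_range Y hvx, map_sum, Finset.smul_sum]
      refine Finset.sum_congr rfl (fun j _ => ?_)
      rw [LinearMap.map_smul, smul_smul, mul_comm]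
    rw [hswap, ← FS_eq_range Y hv3, ← circn_eq_FS]
    exact circn_mem_On Y gr n x' hv
  have hS2mem : (∑ i ∈ range K, ∑ j ∈ range N, ∑ l ∈ range N,
      (zchoose c j * zchoose (e + n) l * zchoose ((j : ℤ) - (P : ℤ)) i) •
        Y (YV u (i : ℤ) v) ((j : ℤ) + (l : ℤ) - ((P : ℤ) + 2 * (n : ℤ) + 2 + (i : ℤ))) x)
      ∈ On Y gr n := by
    refine Submodule.sum_mem _ (fun i hi => ?_)
    have hiK : i < K := mem_range.mp hi
    have hvig : YV u (i : ℤ) v ∈ gr (d + e - i - 1) := hgr d e u v hu hv i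
    have hUa : ∀ a : ℕ, a ≤ i → (∑ j ∈ range N, ∑ l ∈ range N,
        ((if a ≤ j then zchoose (c - a) (j - a) else 0) * zchoose (e + n) l) •
          Y (YV u (i : ℤ) v) ((j : ℤ) + (l : ℤ) - ((P : ℤ) + 2 * (n : ℤ) + 2 + (i : ℤ))) x)
        ∈ On Y gr n := by
      intro a ha
      have e1 : ∀ j ∈ range N, (∑ l ∈ range N,
          ((if a ≤ j then zchoose (c - a) (j - a) else 0) * zchoose (e + n) l) •
            Y (YV u (i : ℤ) v) ((j : ℤ) + (l : ℤ) - ((P : ℤ) + 2 * (n : ℤ) + 2 + (i : ℤ))) x)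
          = if a ≤ j then (∑ l ∈ range N, (zchoose (c - a) (j - a) * zchoose (e + n) l) •
              Y (YV u (i : ℤ) v) ((j : ℤ) + (l : ℤ) - ((P : ℤ) + 2 * (n : ℤ) + 2 + (i : ℤ))) x)
            else 0 := by
        intro j _
        by_cases haj : a ≤ j
        · simp only [if_pos haj]
        · simp only [if_neg haj, zero_mul, zero_smul, Finset.sum_const_zero]
      rw [Finset.sum_congr rfl e1, ← Finset.sum_filter]
      have hIco : (range N).filter (fun j => a ≤ j) = Finset.Ico a N := by
        ext j
        simp only [Finset.mem_filter, mem_range, Finset.mem_Ico]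
        omega
      rw [hIco, Finset.sum_Ico_eq_sum_range]
      have e2 : ∀ j' ∈ range (N - a), (∑ l ∈ range N,
          (zchoose (c - a) (a + j' - a) * zchoose (e + n) l) •
            Y (YV u (i : ℤ) v)
              (((a + j' : ℕ) : ℤ) + (l : ℤ) - ((P : ℤ) + 2 * (n : ℤ) + 2 + (i : ℤ))) x)
          = ∑ l ∈ range N, (zchoose (c - a) j' * zchoose (e + n) l) •
              Y (YV u (i : ℤ) v)
                ((j' : ℤ) + (l : ℤ) - ((P : ℤ) + 2 * (n : ℤ) + 2 + (i : ℤ) - (a : ℤ))) x := by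
        intro j' _
        refine Finset.sum_congr rfl (fun l _ => ?_)
        rw [Nat.add_sub_cancel_left]
        congr 2
        push_cast; ring
      rw [Finset.sum_congr rfl e2]
      have hext : ∀ j' ∈ range N, j' ∉ range (N - a) →
          (∑ l ∈ range N, (zchoose (c - a) j' * zchoose (e + n) l) •
            Y (YV u (i : ℤ) v)
              ((j' : ℤ) + (l : ℤ) - ((P : ℤ) + 2 * (n : ℤ) + 2 + (i : ℤ) - (a : ℤ))) x) = 0 := by
        intro j' hj1 hj2
        refine Finset.sum_eq_zero (fun l _ => ?_)
        have hz : Y (YV u (i : ℤ) v)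
            (((j' : ℤ) + (l : ℤ) + (a : ℤ)) - ((P : ℤ) + 2 * (n : ℤ) + 2 + (i : ℤ))) x = 0 := by
          refine hv4 i hiK _ ?_
          simp only [mem_range] at hj1 hj2
          omega
        rw [show (j' : ℤ) + (l : ℤ) - ((P : ℤ) + 2 * (n : ℤ) + 2 + (i : ℤ) - (a : ℤ))
          = ((j' : ℤ) + (l : ℤ) + (a : ℤ)) - ((P : ℤ) + 2 * (n : ℤ) + 2 + (i : ℤ)) by ring, hz,
          smul_zero]
      rw [Finset.sum_subset (Finset.range_subset_range.mpr (show N - a ≤ N by omega)) hext]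
      have hgm : ∀ t : ℕ, N ≤ t → Y (YV u (i : ℤ) v)
          ((t : ℤ) - ((P : ℤ) + 2 * (n : ℤ) + 2 + (i : ℤ) - (a : ℤ))) x = 0 := by
        intro t ht
        rw [show (t : ℤ) - ((P : ℤ) + 2 * (n : ℤ) + 2 + (i : ℤ) - (a : ℤ))
          = ((t : ℤ) + (a : ℤ)) - ((P : ℤ) + 2 * (n : ℤ) + 2 + (i : ℤ)) by ring]
        exact hv4 i hiK _ (by omega)
      rw [merge Y (YV u (i : ℤ) v) x (c - a) (e + n)
        ((P : ℤ) + 2 * (n : ℤ) + 2 + (i : ℤ) - (a : ℤ)) N hgm]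
      rw [← FS_eq_range Y hgm]
      rw [FS_congr Y rfl (show (P : ℤ) + 2 * (n : ℤ) + 2 + (i : ℤ) - (a : ℤ)
        = 2 * (n : ℤ) + 2 + ((P + (i - a) : ℕ) : ℤ) by push_cast [Nat.cast_sub ha]; ring)]
      refine lemA' Y YV gr ω n htr hgr hω hL1der hvig x (c - a + (e + n)) (P + (i - a)) ?_ ?_
      · omega
      · push_cast [Nat.cast_sub ha]
        omega
    -- reorganize the (j,l) sum via zchoose_I1
    have hterm : ∀ j ∈ range N, ∀ l ∈ range N,
        (zchoose c j * zchoose (e + n) l * zchoose ((j : ℤ) - (P : ℤ)) i) •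
          Y (YV u (i : ℤ) v) ((j : ℤ) + (l : ℤ) - ((P : ℤ) + 2 * (n : ℤ) + 2 + (i : ℤ))) x
        = ∑ a ∈ range (i + 1), (zchoose c a * zchoose (-(P : ℤ)) (i - a)) •
            (((if a ≤ j then zchoose (c - a) (j - a) else 0) * zchoose (e + n) l) •
              Y (YV u (i : ℤ) v) ((j : ℤ) + (l : ℤ) - ((P : ℤ) + 2 * (n : ℤ) + 2 + (i : ℤ))) x)
        := by
      intro j _ l _
      rw [show zchoose c j * zchoose (e + n) l * zchoose ((j : ℤ) - (P : ℤ)) i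
          = (zchoose c j * zchoose ((j : ℤ) - (P : ℤ)) i) * zchoose (e + n) l by ring]
      rw [show (j : ℤ) - (P : ℤ) = (j : ℤ) + (-(P : ℤ)) by ring]
      rw [zchoose_I1 c (-(P : ℤ)) j i, Finset.sum_mul, Finset.sum_smul]
      refine Finset.sum_congr rfl (fun a _ => ?_)
      rw [mul_assoc, mul_smul]
    rw [Finset.sum_congr rfl (fun j hj => Finset.sum_congr rfl (hterm j hj))]
    have swap1 : ∀ j ∈ range N, (∑ l ∈ range N, ∑ a ∈ range (i + 1),
        (zchoose c a * zchoose (-(P : ℤ)) (i - a)) •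
          (((if a ≤ j then zchoose (c - a) (j - a) else 0) * zchoose (e + n) l) •
            Y (YV u (i : ℤ) v) ((j : ℤ) + (l : ℤ) - ((P : ℤ) + 2 * (n : ℤ) + 2 + (i : ℤ))) x))
        = ∑ a ∈ range (i + 1), ∑ l ∈ range N,
        (zchoose c a * zchoose (-(P : ℤ)) (i - a)) •
          (((if a ≤ j then zchoose (c - a) (j - a) else 0) * zchoose (e + n) l) •
            Y (YV u (i : ℤ) v) ((j : ℤ) + (l : ℤ) - ((P : ℤ) + 2 * (n : ℤ) + 2 + (i : ℤ))) x) :=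
      fun j _ => Finset.sum_comm
    rw [Finset.sum_congr rfl swap1, Finset.sum_comm]
    refine Submodule.sum_mem _ (fun a ha => ?_)
    have haa : a ≤ i := by simp only [mem_range] at ha; omega
    have hfact : ∑ j ∈ range N, ∑ l ∈ range N,
        (zchoose c a * zchoose (-(P : ℤ)) (i - a)) •
          (((if a ≤ j then zchoose (c - a) (j - a) else 0) * zchoose (e + n) l) •
            Y (YV u (i : ℤ) v) ((j : ℤ) + (l : ℤ) - ((P : ℤ) + 2 * (n : ℤ) + 2 + (i : ℤ))) x)
        = (zchoose c a * zchoose (-(P : ℤ)) (i - a)) • ∑ j ∈ range N, ∑ l ∈ range N,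
            (((if a ≤ j then zchoose (c - a) (j - a) else 0) * zchoose (e + n) l) •
              Y (YV u (i : ℤ) v) ((j : ℤ) + (l : ℤ) - ((P : ℤ) + 2 * (n : ℤ) + 2 + (i : ℤ))) x)
        := by
      rw [Finset.smul_sum]
      exact Finset.sum_congr rfl (fun j _ => by rw [Finset.smul_sum])
    rw [hfact]
    exact Submodule.smul_mem _ _ (hUa a haa)
  -- main assembly
  suffices hmain : FS Y u c (P : ℤ) W
      = (∑ j ∈ range N, ∑ l ∈ range N, (zchoose c j * zchoose (e + n) l) •
          Y v ((l : ℤ) - (2 * (n : ℤ) + 2)) (Y u ((j : ℤ) - (P : ℤ)) x))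
        + (∑ i ∈ range K, ∑ j ∈ range N, ∑ l ∈ range N,
          (zchoose c j * zchoose (e + n) l * zchoose ((j : ℤ) - (P : ℤ)) i) •
            Y (YV u (i : ℤ) v) ((j : ℤ) + (l : ℤ) - ((P : ℤ) + 2 * (n : ℤ) + 2 + (i : ℤ))) x) by
    rw [hmain]
    exact Submodule.add_mem _ hS1mem hS2mem
  have E2 : W = ∑ l ∈ range N, zchoose (e + n) l • Y v ((l : ℤ) - (2 * (n : ℤ) + 2)) x := by
    rw [hW, circn_eq_FS]
    exact FS_eq_range Y hv2
  have E3 : FS Y u c (P : ℤ) W = ∑ j ∈ range N, ∑ l ∈ range N,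
      (zchoose c j * zchoose (e + n) l) •
        Y u ((j : ℤ) - (P : ℤ)) (Y v ((l : ℤ) - (2 * (n : ℤ) + 2)) x) := by
    rw [FS_eq_range Y hvW]
    refine Finset.sum_congr rfl (fun j _ => ?_)
    rw [E2, map_sum, Finset.smul_sum]
    refine Finset.sum_congr rfl (fun l _ => ?_)
    rw [LinearMap.map_smul, smul_smul]
  rw [E3]
  have E4 : ∀ j ∈ range N, ∀ l ∈ range N,
      (zchoose c j * zchoose (e + n) l) •
        Y u ((j : ℤ) - (P : ℤ)) (Y v ((l : ℤ) - (2 * (n : ℤ) + 2)) x)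
      = (zchoose c j * zchoose (e + n) l) •
          Y v ((l : ℤ) - (2 * (n : ℤ) + 2)) (Y u ((j : ℤ) - (P : ℤ)) x)
        + ∑ i ∈ range K, (zchoose c j * zchoose (e + n) l * zchoose ((j : ℤ) - (P : ℤ)) i) •
            Y (YV u (i : ℤ) v) ((j : ℤ) + (l : ℤ) - ((P : ℤ) + 2 * (n : ℤ) + 2 + (i : ℤ))) x := by
    intro j _ l _
    rw [comm_formula Y YV hB u v x K hKn ((j : ℤ) - (P : ℤ)) ((l : ℤ) - (2 * (n : ℤ) + 2)),
      smul_add]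
    congr 1
    rw [Finset.smul_sum]
    refine Finset.sum_congr rfl (fun i _ => ?_)
    rw [smul_smul]
    rw [show (j : ℤ) - (P : ℤ) + ((l : ℤ) - (2 * (n : ℤ) + 2)) - (i : ℤ)
      = (j : ℤ) + (l : ℤ) - ((P : ℤ) + 2 * (n : ℤ) + 2 + (i : ℤ)) by ring]
  rw [Finset.sum_congr rfl (fun j hj => Finset.sum_congr rfl (E4 j hj))]
  simp only [Finset.sum_add_distrib]
  congr 1
  -- swap i out of j,l
  have swapA : ∀ j ∈ range N, (∑ l ∈ range N, ∑ i ∈ range K,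
      (zchoose c j * zchoose (e + n) l * zchoose ((j : ℤ) - (P : ℤ)) i) •
        Y (YV u (i : ℤ) v) ((j : ℤ) + (l : ℤ) - ((P : ℤ) + 2 * (n : ℤ) + 2 + (i : ℤ))) x)
      = ∑ i ∈ range K, ∑ l ∈ range N,
      (zchoose c j * zchoose (e + n) l * zchoose ((j : ℤ) - (P : ℤ)) i) •
        Y (YV u (i : ℤ) v) ((j : ℤ) + (l : ℤ) - ((P : ℤ) + 2 * (n : ℤ) + 2 + (i : ℤ))) x :=
    fun j _ => Finset.sum_comm
  rw [Finset.sum_congr rfl swapA, Finset.sum_comm]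

end LemGmain

section Final

variable {V M : Type*} [AddCommGroup V] [Module ℂ V] [AddCommGroup M] [Module ℂ M]
variable (Y : V →ₗ[ℂ] ℤ → M →ₗ[ℂ] M) (YV : V →ₗ[ℂ] ℤ → V →ₗ[ℂ] V)
variable (gr : ℤ → Submodule ℂ V) (ω : V) (n : ℕ)

lemma finsumY_add
    (htr : ∀ (u : V) (w : M), ∃ K : ℕ, ∀ i : ℤ, (K : ℤ) ≤ i → Y u i w = 0)
    (u : V) (coef : ℕ → ℂ) (b : ℤ) (w1 w2 : M) :
    (∑ᶠ i : ℕ, coef i • Y u ((i : ℤ) - b) (w1 + w2))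
      = (∑ᶠ i : ℕ, coef i • Y u ((i : ℤ) - b) w1)
        + ∑ᶠ i : ℕ, coef i • Y u ((i : ℤ) - b) w2 := by
  obtain ⟨Na, hNa⟩ := hbnd Y htr u w1 b
  obtain ⟨Nb, hNb⟩ := hbnd Y htr u w2 b
  set N := max Na Nb with hN
  have h1 : ∀ i : ℕ, N ≤ i → coef i • Y u ((i : ℤ) - b) w1 = 0 := fun i hi => by
    rw [hNa i (by omega), smul_zero]
  have h2 : ∀ i : ℕ, N ≤ i → coef i • Y u ((i : ℤ) - b) w2 = 0 := fun i hi => by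
    rw [hNb i (by omega), smul_zero]
  have h3 : ∀ i : ℕ, N ≤ i → coef i • Y u ((i : ℤ) - b) (w1 + w2) = 0 := fun i hi => by
    rw [map_add, hNa i (by omega), hNb i (by omega), add_zero, smul_zero]
  rw [finsum_eq_range N h1, finsum_eq_range N h2, finsum_eq_range N h3,
    ← Finset.sum_add_distrib]
  exact Finset.sum_congr rfl (fun i _ => by rw [map_add, smul_add])

lemma finsumY_smul
    (htr : ∀ (u : V) (w : M), ∃ K : ℕ, ∀ i : ℤ, (K : ℤ) ≤ i → Y u i w = 0)
    (u : V) (coef : ℕ → ℂ) (b : ℤ) (t : ℂ) (w : M) :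
    (∑ᶠ i : ℕ, coef i • Y u ((i : ℤ) - b) (t • w))
      = t • ∑ᶠ i : ℕ, coef i • Y u ((i : ℤ) - b) w := by
  obtain ⟨Na, hNa⟩ := hbnd Y htr u w b
  have h1 : ∀ i : ℕ, Na ≤ i → coef i • Y u ((i : ℤ) - b) w = 0 := fun i hi => by
    rw [hNa i (by omega), smul_zero]
  have h2 : ∀ i : ℕ, Na ≤ i → coef i • Y u ((i : ℤ) - b) (t • w) = 0 := fun i hi => by
    rw [LinearMap.map_smul, hNa i (by omega), smul_zero, smul_zero]
  rw [finsum_eq_range Na h1, finsum_eq_range Na h2, Finset.smul_sum]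
  exact Finset.sum_congr rfl (fun i _ => by
    rw [LinearMap.map_smul, smul_comm])

lemma lstar_add
    (htr : ∀ (u : V) (w : M), ∃ K : ℕ, ∀ i : ℤ, (K : ℤ) ≤ i → Y u i w = 0)
    (d : ℤ) (u : V) (w1 w2 : M) :
    lstar Y n d u (w1 + w2) = lstar Y n d u w1 + lstar Y n d u w2 := by
  unfold lstar
  rw [← Finset.sum_add_distrib]
  refine Finset.sum_congr rfl (fun m _ => ?_)
  simp only [sub_sub]
  exact finsumY_add Y htr u _ _ w1 w2

lemma lstar_smul
    (htr : ∀ (u : V) (w : M), ∃ K : ℕ, ∀ i : ℤ, (K : ℤ) ≤ i → Y u i w = 0)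
    (d : ℤ) (u : V) (t : ℂ) (w : M) :
    lstar Y n d u (t • w) = t • lstar Y n d u w := by
  unfold lstar
  rw [Finset.smul_sum]
  refine Finset.sum_congr rfl (fun m _ => ?_)
  simp only [sub_sub]
  exact finsumY_smul Y htr u _ _ t w

lemma rstar_add
    (htr : ∀ (u : V) (w : M), ∃ K : ℕ, ∀ i : ℤ, (K : ℤ) ≤ i → Y u i w = 0)
    (d : ℤ) (u : V) (w1 w2 : M) :
    rstar Y n d u (w1 + w2) = rstar Y n d u w1 + rstar Y n d u w2 := by
  unfold rstar
  rw [← Finset.sum_add_distrib]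
  refine Finset.sum_congr rfl (fun m _ => ?_)
  simp only [sub_sub]
  exact finsumY_add Y htr u _ _ w1 w2

lemma rstar_smul
    (htr : ∀ (u : V) (w : M), ∃ K : ℕ, ∀ i : ℤ, (K : ℤ) ≤ i → Y u i w = 0)
    (d : ℤ) (u : V) (t : ℂ) (w : M) :
    rstar Y n d u (t • w) = t • rstar Y n d u w := by
  unfold rstar
  rw [Finset.smul_sum]
  refine Finset.sum_congr rfl (fun m _ => ?_)
  simp only [sub_sub]
  exact finsumY_smul Y htr u _ _ t w

lemma star_term_mem
    (htr : ∀ (u : V) (w : M), ∃ K : ℕ, ∀ i : ℤ, (K : ℤ) ≤ i → Y u i w = 0)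
    (htrV : ∀ u v : V, ∃ K : ℕ, ∀ i : ℤ, (K : ℤ) ≤ i → YV u i v = 0)
    (hgr : ∀ (d e : ℤ) (u v : V), u ∈ gr d → v ∈ gr e → ∀ i : ℤ, YV u i v ∈ gr (d + e - i - 1))
    (hω : ω ∈ gr 2)
    (hL1der : ∀ (u : V) (i : ℤ) (w : M), Y (YV ω 0 u) i w = (-(i : ℂ)) • Y u (i - 1) w)
    (hB : ∀ (u v : V) (w : M) (p q r : ℤ),
      (∑ᶠ i : ℕ, zchoose p i • Y (YV u (r + i) v) (p + q - i) w)
        = (∑ᶠ i : ℕ, ((-1 : ℂ) ^ i * zchoose r i) • Y u (p + r - i) (Y v (q + i) w))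
          - ∑ᶠ i : ℕ, ((-1 : ℂ) ^ i * zchoose r i * (-1 : ℂ) ^ r) •
              Y v (q + r - i) (Y u (p + i) w))
    (d e : ℤ) (u v : V) (x : M) (hu : u ∈ gr d) (hv : v ∈ gr e)
    (m : ℕ) (s : ℂ) (cnum : ℤ) (hcn1 : d - 1 ≤ cnum) (hcn2 : cnum ≤ d + (n : ℤ) + m) :
    (∑ᶠ i : ℕ, (s * zchoose cnum i) • Y u ((i : ℤ) - m - n - 1) (circn Y n e v x))
      ∈ On Y gr n := by
  obtain ⟨Nm, hNm⟩ := hbnd Y htr u (circn Y n e v x) (((n + m + 1 : ℕ) : ℤ))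
  have hvan : ∀ i : ℕ, Nm ≤ i →
      Y u ((i : ℤ) - ((n + m + 1 : ℕ) : ℤ)) (circn Y n e v x) = 0 := fun i hi =>
    hNm i (by omega)
  have hvan2 : ∀ i : ℕ, Nm ≤ i →
      (s * zchoose cnum i) • Y u ((i : ℤ) - (m : ℤ) - (n : ℤ) - 1) (circn Y n e v x) = 0 := by
    intro i hi
    rw [show (i : ℤ) - (m : ℤ) - (n : ℤ) - 1 = (i : ℤ) - ((n + m + 1 : ℕ) : ℤ) by push_cast; ring,
      hvan i hi, smul_zero]
  have heq : (∑ᶠ i : ℕ, (s * zchoose cnum i) • Y u ((i : ℤ) - m - n - 1) (circn Y n e v x))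
      = s • FS Y u cnum ((n + m + 1 : ℕ) : ℤ) (circn Y n e v x) := by
    rw [finsum_eq_range Nm hvan2, FS_eq_range Y hvan, Finset.smul_sum]
    refine Finset.sum_congr rfl (fun i _ => ?_)
    rw [smul_smul]
    rw [show (i : ℤ) - (m : ℤ) - (n : ℤ) - 1 = (i : ℤ) - ((n + m + 1 : ℕ) : ℤ) by push_cast; ring]
  rw [heq]
  refine Submodule.smul_mem _ _ ?_
  refine lemG Y YV gr ω n htr htrV hgr hω hL1der hB d e u v x hu hv (n + m + 1) cnum hcn1 ?_
  push_cast
  omega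

lemma lstar_circ_mem
    (htr : ∀ (u : V) (w : M), ∃ K : ℕ, ∀ i : ℤ, (K : ℤ) ≤ i → Y u i w = 0)
    (htrV : ∀ u v : V, ∃ K : ℕ, ∀ i : ℤ, (K : ℤ) ≤ i → YV u i v = 0)
    (hgr : ∀ (d e : ℤ) (u v : V), u ∈ gr d → v ∈ gr e → ∀ i : ℤ, YV u i v ∈ gr (d + e - i - 1))
    (hω : ω ∈ gr 2)
    (hL1der : ∀ (u : V) (i : ℤ) (w : M), Y (YV ω 0 u) i w = (-(i : ℂ)) • Y u (i - 1) w)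
    (hB : ∀ (u v : V) (w : M) (p q r : ℤ),
      (∑ᶠ i : ℕ, zchoose p i • Y (YV u (r + i) v) (p + q - i) w)
        = (∑ᶠ i : ℕ, ((-1 : ℂ) ^ i * zchoose r i) • Y u (p + r - i) (Y v (q + i) w))
          - ∑ᶠ i : ℕ, ((-1 : ℂ) ^ i * zchoose r i * (-1 : ℂ) ^ r) •
              Y v (q + r - i) (Y u (p + i) w))
    (d e : ℤ) (u v : V) (x : M) (hu : u ∈ gr d) (hv : v ∈ gr e) :
    lstar Y n d u (circn Y n e v x) ∈ On Y gr n := by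
  unfold lstar
  refine Submodule.sum_mem _ (fun m _ => ?_)
  exact star_term_mem Y YV gr ω n htr htrV hgr hω hL1der hB d e u v x hu hv m
    ((-1 : ℂ) ^ m * ((m + n).choose n : ℂ)) (d + n) (by omega) (by omega)

lemma rstar_circ_mem
    (htr : ∀ (u : V) (w : M), ∃ K : ℕ, ∀ i : ℤ, (K : ℤ) ≤ i → Y u i w = 0)
    (htrV : ∀ u v : V, ∃ K : ℕ, ∀ i : ℤ, (K : ℤ) ≤ i → YV u i v = 0)
    (hgr : ∀ (d e : ℤ) (u v : V), u ∈ gr d → v ∈ gr e → ∀ i : ℤ, YV u i v ∈ gr (d + e - i - 1))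
    (hω : ω ∈ gr 2)
    (hL1der : ∀ (u : V) (i : ℤ) (w : M), Y (YV ω 0 u) i w = (-(i : ℂ)) • Y u (i - 1) w)
    (hB : ∀ (u v : V) (w : M) (p q r : ℤ),
      (∑ᶠ i : ℕ, zchoose p i • Y (YV u (r + i) v) (p + q - i) w)
        = (∑ᶠ i : ℕ, ((-1 : ℂ) ^ i * zchoose r i) • Y u (p + r - i) (Y v (q + i) w))
          - ∑ᶠ i : ℕ, ((-1 : ℂ) ^ i * zchoose r i * (-1 : ℂ) ^ r) •
              Y v (q + r - i) (Y u (p + i) w))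
    (d e : ℤ) (u v : V) (x : M) (hu : u ∈ gr d) (hv : v ∈ gr e) :
    rstar Y n d u (circn Y n e v x) ∈ On Y gr n := by
  unfold rstar
  refine Submodule.sum_mem _ (fun m hm => ?_)
  have hmn : m ≤ n := by simp only [mem_range] at hm; omega
  exact star_term_mem Y YV gr ω n htr htrV hgr hω hL1der hB d e u v x hu hv m
    ((-1 : ℂ) ^ m * ((m + n).choose n : ℂ)) (d + m - 1) (by omega) (by omega)

end Final

/-- `V *ₙ O_n(M) ⊆ O_n(M)` and `O_n(M) *ₙ V ⊆ O_n(M)`; in particular the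
quotient `𝔸_n(M) = M / O_n(M)` carries well-defined left and right actions of (homogeneous
elements of) `V`, compatible with the products `*ₙ`. -/
theorem statement8
    (YV : V →ₗ[ℂ] ℤ → V →ₗ[ℂ] V) (Y : V →ₗ[ℂ] ℤ → M →ₗ[ℂ] M)
    (gr : ℤ → Submodule ℂ V) (vac ω : V)
    -- truncation conditions
    (htr : ∀ (u : V) (w : M), ∃ K : ℕ, ∀ i : ℤ, (K : ℤ) ≤ i → Y u i w = 0)
    (htrV : ∀ u v : V, ∃ K : ℕ, ∀ i : ℤ, (K : ℤ) ≤ i → YV u i v = 0)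
    -- vacuum and creation properties
    (hvac : ∀ (i : ℤ) (w : M), Y vac i w = if i = -1 then w else 0)
    (hcreate : ∀ u : V, YV u (-1) vac = u)
    -- grading: `u_i` maps `gr e` into `gr (d + e - i - 1)`, `ω` has weight `2`
    (hgr : ∀ (d e : ℤ) (u v : V), u ∈ gr d → v ∈ gr e →
      ∀ i : ℤ, YV u i v ∈ gr (d + e - i - 1))
    (hω : ω ∈ gr 2)
    -- `L(0)` eigenvalue property and the `L(-1)`-derivative property on `M` and on `V`
    (hL0 : ∀ (d : ℤ) (u : V), u ∈ gr d → YV ω 1 u = (d : ℂ) • u)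
    (hL1der : ∀ (u : V) (i : ℤ) (w : M), Y (YV ω 0 u) i w = (-(i : ℂ)) • Y u (i - 1) w)
    (hL1derV : ∀ (u v : V) (i : ℤ), YV (YV ω 0 u) i v = (-(i : ℂ)) • YV u (i - 1) v)
    -- the Borcherds (Jacobi) identity for the module `M` and for `V` itself
    (hB : ∀ (u v : V) (w : M) (p q r : ℤ),
      (∑ᶠ i : ℕ, zchoose p i • Y (YV u (r + i) v) (p + q - i) w)
        = (∑ᶠ i : ℕ, ((-1 : ℂ) ^ i * zchoose r i) • Y u (p + r - i) (Y v (q + i) w))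
          - ∑ᶠ i : ℕ, ((-1 : ℂ) ^ i * zchoose r i * (-1 : ℂ) ^ r) •
              Y v (q + r - i) (Y u (p + i) w))
    (hBV : ∀ (u v x : V) (p q r : ℤ),
      (∑ᶠ i : ℕ, zchoose p i • YV (YV u (r + i) v) (p + q - i) x)
        = (∑ᶠ i : ℕ, ((-1 : ℂ) ^ i * zchoose r i) • YV u (p + r - i) (YV v (q + i) x))
          - ∑ᶠ i : ℕ, ((-1 : ℂ) ^ i * zchoose r i * (-1 : ℂ) ^ r) •
              YV v (q + r - i) (YV u (p + i) x))
    (n : ℕ) :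
    (∀ (d : ℤ) (u : V) (w : M), u ∈ gr d → w ∈ On Y gr n →
        lstar Y n d u w ∈ On Y gr n ∧ rstar Y n d u w ∈ On Y gr n) ∧
    (∀ (d : ℤ) (u : V), u ∈ gr d →
      (∃ Lu : (M ⧸ On Y gr n) →ₗ[ℂ] (M ⧸ On Y gr n),
        ∀ w : M, Lu (Submodule.Quotient.mk w) = Submodule.Quotient.mk (lstar Y n d u w)) ∧
      (∃ Ru : (M ⧸ On Y gr n) →ₗ[ℂ] (M ⧸ On Y gr n),
        ∀ w : M, Ru (Submodule.Quotient.mk w) = Submodule.Quotient.mk (rstar Y n d u w))) := by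
  have main : ∀ (d : ℤ) (u : V), u ∈ gr d → ∀ w : M, w ∈ On Y gr n →
      lstar Y n d u w ∈ On Y gr n ∧ rstar Y n d u w ∈ On Y gr n := by
    intro d u hu w hw
    have hw' : w ∈ Submodule.span ℂ
        {x : M | ∃ (d : ℤ) (u : V) (w : M), u ∈ gr d ∧ x = circn Y n d u w} := hw
    refine Submodule.span_induction ?_ ?_ ?_ ?_ hw'
    · rintro y ⟨e, v, z, hv, rfl⟩
      exact ⟨lstar_circ_mem Y YV gr ω n htr htrV hgr hω hL1der hB d e u v z hu hv,
        rstar_circ_mem Y YV gr ω n htr htrV hgr hω hL1der hB d e u v z hu hv⟩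
    · have h1 : lstar Y n d u ((0 : ℂ) • (0 : M)) = (0 : ℂ) • lstar Y n d u 0 :=
        lstar_smul Y n htr d u 0 0
      have h2 : rstar Y n d u ((0 : ℂ) • (0 : M)) = (0 : ℂ) • rstar Y n d u 0 :=
        rstar_smul Y n htr d u 0 0
      simp only [zero_smul] at h1 h2
      rw [h1, h2]
      exact ⟨Submodule.zero_mem _, Submodule.zero_mem _⟩
    · intro a b _ _ ha hb
      rw [lstar_add Y n htr d u a b, rstar_add Y n htr d u a b]
      exact ⟨Submodule.add_mem _ ha.1 hb.1, Submodule.add_mem _ ha.2 hb.2⟩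
    · intro t a _ ha
      rw [lstar_smul Y n htr d u t a, rstar_smul Y n htr d u t a]
      exact ⟨Submodule.smul_mem _ _ ha.1, Submodule.smul_mem _ _ ha.2⟩
  refine ⟨fun d u w hu hw => main d u hu w hw, fun d u hu => ?_⟩
  have mkL : ∀ (f : M → M), (∀ w1 w2, f (w1 + w2) = f w1 + f w2) →
      (∀ (t : ℂ) w, f (t • w) = t • f w) →
      (∀ w ∈ On Y gr n, f w ∈ On Y gr n) →
      ∃ F : (M ⧸ On Y gr n) →ₗ[ℂ] (M ⧸ On Y gr n),
        ∀ w : M, F (Submodule.Quotient.mk w) = Submodule.Quotient.mk (f w) := by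
    intro f hadd hsmul hmem
    set fl : M →ₗ[ℂ] M :=
      { toFun := f
        map_add' := hadd
        map_smul' := fun t w => hsmul t w } with hfl
    refine ⟨Submodule.liftQ (On Y gr n) ((On Y gr n).mkQ.comp fl) ?_, fun w => ?_⟩
    · intro w hw
      simp only [LinearMap.mem_ker, LinearMap.comp_apply, Submodule.mkQ_apply]
      exact (Submodule.Quotient.mk_eq_zero _).mpr (hmem w hw)
    · rw [Submodule.liftQ_apply]
      rfl
  exact ⟨mkL (lstar Y n d u) (lstar_add Y n htr d u) (lstar_smul Y n htr d u)
      (fun w hw => (main d u hu w hw).1),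
    mkL (rstar Y n d u) (rstar_add Y n htr d u) (rstar_smul Y n htr d u)
      (fun w hw => (main d u hu w hw).2)⟩
end

section
/- Let g(z) = ∑_{n ≥ N} v_n z^{n+α} be a formal series with coefficients in a vector space V (N ∈ ℤ, α ∈ ℂ) and f(z) = ∑_{n > 0} c_n z^n a formal power series with c_1 ≠ 0 having no constant term. Then Res_z g(z) = Res_{z_0} ( g(f(z_0)) · (d/dz_0) f(z_0) ), where Res extracts the coefficient of z^{-1}. -/
open Finset

/-!
Statement 13 (Zhu's change-of-variable formula for formal residues).
A series `g(z) = ∑_{n ≥ N} v_n z^{n+α}` with coefficients `v : ℤ → V` (vanishing below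
`N`) is encoded by its coefficient function; `Res_z g` is the coefficient of `z^{-1}`,
i.e. `v m` for the (unique) integer `m` with `m + α = -1`, and `0` if there is no such
integer.  For `f(z) = ∑_{n > 0} c_n z^n` with `c 1 ≠ 0` write `f(z) = c 1 · z · (1 + u(z))`
with `u` a power series without constant term; then
`g(f(z₀)) · f'(z₀) = ∑_n v_n (c 1)^{n+α} z₀^{n+α} (1+u(z₀))^{n+α} f'(z₀)`,
whose coefficient of `z₀^{m+α}` is
`∑_{N ≤ n ≤ m} (c 1)^{n+α} · coeff_{m-n}((1+u)^{n+α} · f') • v n`.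
The theorem states `Res_z g(z) = Res_{z₀} ( g(f(z₀)) · f'(z₀) )`.
-/

/-- The generalized binomial coefficient `C(β, k)` for `β : ℂ`. -/
noncomputable def cchoose (β : ℂ) (k : ℕ) : ℂ :=
  (∏ i ∈ range k, (β - (i : ℂ))) / (k.factorial : ℂ)

/-- The power series `u(z)` with `f(z) = c 1 · z · (1 + u(z))`, i.e.
`u(z) = ∑_{k ≥ 1} (c (k+1) / c 1) z^k`. -/
noncomputable def useries (c : ℕ → ℂ) : PowerSeries ℂ :=
  PowerSeries.mk fun k => if k = 0 then 0 else c (k + 1) / c 1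

/-- The binomial series `(1 + u(z))^β = ∑_k C(β,k) u(z)^k`. -/
noncomputable def binomPow (c : ℕ → ℂ) (β : ℂ) : PowerSeries ℂ :=
  PowerSeries.mk fun j =>
    ∑ k ∈ range (j + 1), cchoose β k * PowerSeries.coeff j ((useries c) ^ k)

/-- The formal derivative `f'(z) = ∑_{j ≥ 0} (j+1) c_{j+1} z^j` of
`f(z) = ∑_{n > 0} c_n z^n`. -/
noncomputable def fder (c : ℕ → ℂ) : PowerSeries ℂ :=
  PowerSeries.mk fun j => ((j + 1 : ℕ) : ℂ) * c (j + 1)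

lemma cchoose_zero (β : ℂ) : cchoose β 0 = 1 := by simp [cchoose]

lemma cchoose_succ_mul (β : ℂ) (k : ℕ) :
    ((k : ℂ) + 1) * cchoose β (k + 1) = β * cchoose (β - 1) k := by
  have hf : ((k + 1).factorial : ℂ) ≠ 0 := Nat.cast_ne_zero.mpr (k + 1).factorial_ne_zero
  have hf' : ((k).factorial : ℂ) ≠ 0 := Nat.cast_ne_zero.mpr k.factorial_ne_zero
  have hp : ∏ i ∈ range (k + 1), (β - (i : ℂ)) = (∏ i ∈ range k, (β - 1 - (i : ℂ))) * β := by
    rw [Finset.prod_range_succ']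
    congr 1
    · exact Finset.prod_congr rfl fun i _ => by push_cast; ring
    · simp
  have hk1 : ((k : ℂ) + 1) ≠ 0 := by exact_mod_cast (Nat.succ_ne_zero k)
  unfold cchoose
  rw [hp, Nat.factorial_succ]
  push_cast
  field_simp

lemma cchoose_pascal (β : ℂ) (k : ℕ) :
    cchoose (β + 1) (k + 1) = cchoose β (k + 1) + cchoose β k := by
  have hf : ((k + 1).factorial : ℂ) ≠ 0 := Nat.cast_ne_zero.mpr (k + 1).factorial_ne_zero
  have hf' : ((k).factorial : ℂ) ≠ 0 := Nat.cast_ne_zero.mpr k.factorial_ne_zero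
  have hp : ∏ i ∈ range (k + 1), (β + 1 - (i : ℂ)) = (∏ i ∈ range k, (β - (i : ℂ))) * (β + 1) := by
    rw [Finset.prod_range_succ']
    congr 1
    · exact Finset.prod_congr rfl fun i _ => by push_cast; ring
    · simp
  have hk1 : ((k : ℂ) + 1) ≠ 0 := by exact_mod_cast (Nat.succ_ne_zero k)
  unfold cchoose
  rw [hp, Finset.prod_range_succ, Nat.factorial_succ]
  push_cast
  field_simp
  ring

variable (c : ℕ → ℂ)

lemma useries_const : PowerSeries.constantCoeff (useries c) = 0 := by
  simp [useries, ← PowerSeries.coeff_zero_eq_constantCoeff]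

lemma coeff_upow_eq_zero {j k : ℕ} (h : j < k) :
    PowerSeries.coeff j ((useries c) ^ k) = 0 := by
  have hdvd : (PowerSeries.X : PowerSeries ℂ) ^ k ∣ (useries c) ^ k :=
    pow_dvd_pow_of_dvd (PowerSeries.X_dvd_iff.mpr (useries_const c)) k
  exact (PowerSeries.X_pow_dvd_iff.mp hdvd) j h

lemma coeff_binomPow_mul (β : ℂ) (j : ℕ) (g : PowerSeries ℂ) :
    PowerSeries.coeff j (binomPow c β * g) =
      ∑ k ∈ range (j + 1), cchoose β k * PowerSeries.coeff j ((useries c) ^ k * g) := by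
  rw [PowerSeries.coeff_mul]
  have h1 : ∀ p ∈ antidiagonal j,
      PowerSeries.coeff p.1 (binomPow c β) * PowerSeries.coeff p.2 g =
        ∑ k ∈ range (j + 1),
          cchoose β k * (PowerSeries.coeff p.1 ((useries c) ^ k) * PowerSeries.coeff p.2 g) := by
    intro p hp
    have hp1 : p.1 ≤ j := (Finset.HasAntidiagonal.antidiagonal.fst_le hp)
    have : PowerSeries.coeff p.1 (binomPow c β) =
        ∑ k ∈ range (j + 1), cchoose β k * PowerSeries.coeff p.1 ((useries c) ^ k) := by
      simp only [binomPow, PowerSeries.coeff_mk]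
      apply Finset.sum_subset
      · exact Finset.range_subset_range.mpr (by omega)
      · intro k hk hk'
        simp only [Finset.mem_range, not_lt] at hk'
        rw [coeff_upow_eq_zero c (by omega), mul_zero]
    rw [this, Finset.sum_mul]
    exact Finset.sum_congr rfl fun k _ => by ring
  rw [Finset.sum_congr rfl h1, Finset.sum_comm]
  exact Finset.sum_congr rfl fun k _ => by
    rw [← Finset.mul_sum, PowerSeries.coeff_mul]

lemma binomPow_succ (β : ℂ) :
    binomPow c (β + 1) = binomPow c β * (1 + useries c) := by
  ext j
  rw [coeff_binomPow_mul]
  set A : ℕ → ℂ := fun k => PowerSeries.coeff j ((useries c) ^ k) with hA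
  have hmul : ∀ k, PowerSeries.coeff j ((useries c) ^ k * (1 + useries c)) = A k + A (k + 1) := by
    intro k
    rw [mul_add, mul_one, map_add, ← pow_succ]
  have hL : PowerSeries.coeff j (binomPow c (β + 1)) =
      ∑ k ∈ range (j + 1), cchoose (β + 1) k * A k := by
    simp [binomPow, hA]
  have h2 : ∑ k ∈ range (j + 1), cchoose β k * PowerSeries.coeff j ((useries c) ^ k * (1 + useries c)) =
      ∑ k ∈ range (j + 1), cchoose β k * (A k + A (k + 1)) :=
    Finset.sum_congr rfl fun k _ => by rw [hmul]
  rw [hL, h2]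
  have hRHS : ∑ k ∈ range (j + 1), cchoose β k * (A k + A (k + 1)) =
      (∑ k ∈ range (j + 1), cchoose β k * A k) +
      ∑ k ∈ range (j + 1), cchoose β k * A (k + 1) := by
    rw [← Finset.sum_add_distrib]
    exact Finset.sum_congr rfl fun k _ => by ring
  rw [hRHS, Finset.sum_range_succ' (fun k => cchoose (β + 1) k * A k) j,
    Finset.sum_range_succ' (fun k => cchoose β k * A k) j,
    Finset.sum_range_succ (fun k => cchoose β k * A (k + 1)) j]
  have hAj : A (j + 1) = 0 := coeff_upow_eq_zero c (by omega)
  rw [hAj, mul_zero, add_zero, cchoose_zero, cchoose_zero]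
  have h3 : ∀ k ∈ range j, cchoose (β + 1) (k + 1) * A (k + 1) =
      cchoose β (k + 1) * A (k + 1) + cchoose β k * A (k + 1) :=
    fun k _ => by rw [cchoose_pascal]; ring
  rw [Finset.sum_congr rfl h3, Finset.sum_add_distrib]
  ring

/-- `w = X * u'`. -/
noncomputable def wser (c : ℕ → ℂ) : PowerSeries ℂ :=
  PowerSeries.X * PowerSeries.derivative ℂ (useries c)

lemma wser_const : PowerSeries.constantCoeff (wser c) = 0 := by
  simp [wser]

lemma coeff_j_upow_mul_w (j : ℕ) :
    PowerSeries.coeff j ((useries c) ^ j * wser c) = 0 := by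
  have hdvd : (PowerSeries.X : PowerSeries ℂ) ^ (j + 1) ∣ (useries c) ^ j * wser c := by
    have h1 : (PowerSeries.X : PowerSeries ℂ) ^ j ∣ (useries c) ^ j :=
      pow_dvd_pow_of_dvd (PowerSeries.X_dvd_iff.mpr (useries_const c)) j
    have h2 : (PowerSeries.X : PowerSeries ℂ) ∣ wser c :=
      PowerSeries.X_dvd_iff.mpr (wser_const c)
    rw [pow_succ]
    exact mul_dvd_mul h1 h2
  exact (PowerSeries.X_pow_dvd_iff.mp hdvd) j (by omega)

lemma j_coeff_upow (j k : ℕ) :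
    (j : ℂ) * PowerSeries.coeff j ((useries c) ^ k) =
      (k : ℂ) * PowerSeries.coeff j ((useries c) ^ (k - 1) * wser c) := by
  rcases Nat.eq_zero_or_pos k with hk | hk
  · subst hk
    simp only [pow_zero, Nat.cast_zero, zero_mul]
    rcases Nat.eq_zero_or_pos j with hj | hj
    · subst hj; simp
    · rw [PowerSeries.coeff_one, if_neg (by omega), mul_zero]
  rcases Nat.eq_zero_or_pos j with hj | hj
  · subst hj
    rw [PowerSeries.coeff_zero_eq_constantCoeff, map_mul, wser_const, mul_zero, mul_zero,
      Nat.cast_zero, zero_mul]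
  -- j ≥ 1, k ≥ 1
  have hD : PowerSeries.derivative ℂ ((useries c) ^ k) =
      (k : ℕ) • ((useries c) ^ (k - 1) • PowerSeries.derivative ℂ (useries c)) :=
    Derivation.leibniz_pow (PowerSeries.derivative ℂ) (useries c) k
  have hl : (useries c) ^ (k - 1) * wser c =
      PowerSeries.X * ((useries c) ^ (k - 1) * PowerSeries.derivative ℂ (useries c)) := by
    rw [wser]; ring
  obtain ⟨j', rfl⟩ : ∃ j', j = j' + 1 := ⟨j - 1, by omega⟩
  rw [hl, PowerSeries.coeff_succ_X_mul]
  have hD' : PowerSeries.coeff j' (PowerSeries.derivative ℂ ((useries c) ^ k)) =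
      PowerSeries.coeff (j' + 1) ((useries c) ^ k) * (j' + 1) :=
    PowerSeries.coeff_derivative _ _
  rw [hD] at hD'
  simp only [smul_eq_mul, nsmul_eq_mul] at hD'
  rw [← map_natCast (PowerSeries.C) k, PowerSeries.coeff_C_mul] at hD'
  push_cast
  push_cast at hD'
  linear_combination -hD'

lemma keyB (γ : ℂ) (j : ℕ) :
    (j : ℂ) * PowerSeries.coeff j (binomPow c γ) =
      γ * PowerSeries.coeff j (binomPow c (γ - 1) * wser c) := by
  rw [coeff_binomPow_mul]
  have hL : (j : ℂ) * PowerSeries.coeff j (binomPow c γ) =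
      ∑ k ∈ range (j + 1),
        cchoose γ k * ((k : ℂ) * PowerSeries.coeff j ((useries c) ^ (k - 1) * wser c)) := by
    simp only [binomPow, PowerSeries.coeff_mk]
    rw [Finset.mul_sum]
    exact Finset.sum_congr rfl fun k _ => by rw [← j_coeff_upow]; ring
  rw [hL, Finset.sum_range_succ' _ j]
  simp only [Nat.cast_zero, zero_mul, mul_zero, add_zero]
  rw [Finset.mul_sum, Finset.sum_range_succ, coeff_j_upow_mul_w, mul_zero, mul_zero, add_zero]
  refine Finset.sum_congr rfl fun k _ => ?_
  have habs := cchoose_succ_mul γ k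
  have hk : (k + 1) - 1 = k := rfl
  rw [hk]
  push_cast
  linear_combination (PowerSeries.coeff j ((useries c) ^ k * wser c)) * habs

lemma fder_eq (hc1 : c 1 ≠ 0) :
    fder c = PowerSeries.C (c 1) * (1 + useries c + wser c) := by
  ext k
  rw [PowerSeries.coeff_C_mul]
  cases k with
  | zero =>
      simp [fder, useries, wser, PowerSeries.coeff_zero_X_mul]
  | succ k' =>
      have hw : PowerSeries.coeff (k' + 1) (wser c) =
          PowerSeries.coeff (k' + 1) (useries c) * (k' + 1) := by
        rw [wser, PowerSeries.coeff_succ_X_mul, PowerSeries.coeff_derivative]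
      simp only [fder, useries, PowerSeries.coeff_mk, map_add, hw, PowerSeries.coeff_one,
        if_neg (Nat.succ_ne_zero k')]
      field_simp
      push_cast
      ring

lemma key (hc1 : c 1 ≠ 0) (j : ℕ) (hj : 1 ≤ j) :
    PowerSeries.coeff j (binomPow c (-1 - (j : ℂ)) * fder c) = 0 := by
  rw [fder_eq c hc1]
  have hsplit : binomPow c (-1 - (j : ℂ)) * (PowerSeries.C (c 1) * (1 + useries c + wser c)) =
      PowerSeries.C (c 1) * (binomPow c (-1 - (j : ℂ)) * (1 + useries c)) +
        PowerSeries.C (c 1) * (binomPow c (-1 - (j : ℂ)) * wser c) := by ring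
  rw [hsplit, ← binomPow_succ, map_add, PowerSeries.coeff_C_mul, PowerSeries.coeff_C_mul]
  have hB := keyB c (-1 - (j : ℂ) + 1) j
  have hγ1 : (-1 - (j : ℂ) + 1) - 1 = -1 - (j : ℂ) := by ring
  rw [hγ1] at hB
  have hjne : (j : ℂ) ≠ 0 := Nat.cast_ne_zero.mpr (by omega)
  have hXY : PowerSeries.coeff j (binomPow c (-1 - (j : ℂ) + 1)) =
      - PowerSeries.coeff j (binomPow c (-1 - (j : ℂ)) * wser c) :=
    mul_left_cancel₀ hjne (by linear_combination hB)
  rw [hXY]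
  ring

lemma key0 : PowerSeries.coeff 0 (binomPow c (-1) * fder c) = c 1 := by
  rw [PowerSeries.coeff_zero_eq_constantCoeff, map_mul]
  have hB : PowerSeries.constantCoeff (binomPow c (-1)) = 1 := by
    rw [← PowerSeries.coeff_zero_eq_constantCoeff]
    simp [binomPow, cchoose_zero]
  have hf : PowerSeries.constantCoeff (fder c) = c 1 := by
    rw [← PowerSeries.coeff_zero_eq_constantCoeff]
    simp [fder]
  rw [hB, hf, one_mul]


open scoped Classical in
/-- `Res_z g(z) = Res_{z₀} ( g(f(z₀)) · (d/dz₀) f(z₀) )`. -/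
theorem statement13 {V : Type*} [AddCommGroup V] [Module ℂ V]
    (v : ℤ → V) (N : ℤ) (hv : ∀ n : ℤ, n < N → v n = 0)
    (α : ℂ) (c : ℕ → ℂ) (hc0 : c 0 = 0) (hc1 : c 1 ≠ 0) :
    (if h : ∃ m : ℤ, (m : ℂ) + α = -1 then v h.choose else 0) =
      (if h : ∃ m : ℤ, (m : ℂ) + α = -1 then
        ∑ n ∈ Finset.Icc N h.choose,
          (c 1 ^ ((n : ℂ) + α) *
            PowerSeries.coeff (h.choose - n).toNat (binomPow c ((n : ℂ) + α) * fder c)) • v n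
      else 0) := by
  split_ifs with h
  · set m := h.choose with hmdef
    have hm : (m : ℂ) + α = -1 := h.choose_spec
    rw [Finset.sum_eq_single m]
    · rw [hm, sub_self, Int.toNat_zero, key0 c, Complex.cpow_neg_one,
        inv_mul_cancel₀ hc1, one_smul]
    · intro n hn hne
      have hnm : n < m := lt_of_le_of_ne (Finset.mem_Icc.mp hn).2 hne
      set j := (m - n).toNat with hjdef
      have hj1 : 1 ≤ j := by omega
      have hcast : ((j : ℕ) : ℂ) = (m : ℂ) - (n : ℂ) := by
        have h1 : ((j : ℤ)) = m - n := Int.toNat_of_nonneg (by omega)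
        exact_mod_cast congrArg (Int.cast : ℤ → ℂ) h1
      have hexp : (n : ℂ) + α = -1 - (j : ℂ) := by rw [hcast]; linear_combination hm
      rw [hexp, key c hc1 j hj1, mul_zero, zero_smul]
    · intro hm'
      have hvm : v m = 0 := by
        apply hv
        simp only [Finset.mem_Icc] at hm'
        omega
      rw [hvm, smul_zero]
  · rfl
end

section
/- Let V be a vertex operator algebra and M = ⊕_{m≥0} M(m) an admissible V-module. Then for each m ≤ n, the homogeneous subspace M(m) is an A_n(V)-submodule of Ω_n(M) under the action v + O_n(V) ↦ o(v) = v_{wt v-1}. -/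
open Finset

variable {V M : Type*} [AddCommGroup V] [Module ℂ V] [AddCommGroup M] [Module ℂ M]

/-- `Ω_n(W) = {w ∈ W : u_m w = 0 for all homogeneous u of weight d and all m > d - 1 + n}`. -/
def Omegan (Y : V →ₗ[ℂ] ℤ → M →ₗ[ℂ] M) (gr : ℤ → Submodule ℂ V) (n : ℕ) :
    Submodule ℂ M where
  carrier := {w | ∀ (d : ℤ) (u : V), u ∈ gr d → ∀ m : ℤ, d - 1 + n < m → Y u m w = 0}
  add_mem' := by
    intro a b ha hb d u hu m hm
    rw [map_add, ha d u hu m hm, hb d u hu m hm, add_zero]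
  zero_mem' := by
    intro d u hu m hm
    exact map_zero _
  smul_mem' := by
    intro c w hw d u hu m hm
    rw [map_smul, hw d u hu m hm, smul_zero]

/-- If `M = ⊕_{m ≥ 0} M(m)` is an admissible `V`-module (the grading
`grM` vanishes in negative degrees and satisfies `v_k M(m) ⊆ M(m + wt v - k - 1)`), then
for each `m ≤ n` the homogeneous subspace `M(m)` is contained in `Ω_n(M)` and is invariant
under all of the operators `o(v) = v_{wt v - 1}`, i.e. `M(m)` is an `A_n(V)`-submodule
of `Ω_n(M)`. -/
theorem statement15
    (YV : V →ₗ[ℂ] ℤ → V →ₗ[ℂ] V) (Y : V →ₗ[ℂ] ℤ → M →ₗ[ℂ] M)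
    (gr : ℤ → Submodule ℂ V) (vac ω : V)
    -- truncation conditions
    (htr : ∀ (u : V) (w : M), ∃ K : ℕ, ∀ i : ℤ, (K : ℤ) ≤ i → Y u i w = 0)
    (htrV : ∀ u v : V, ∃ K : ℕ, ∀ i : ℤ, (K : ℤ) ≤ i → YV u i v = 0)
    -- vacuum and creation properties
    (hvac : ∀ (i : ℤ) (w : M), Y vac i w = if i = -1 then w else 0)
    (hcreate : ∀ u : V, YV u (-1) vac = u)
    -- grading: `u_i` maps `gr e` into `gr (d + e - i - 1)`, `ω` has weight `2`
    (hgr : ∀ (d e : ℤ) (u v : V), u ∈ gr d → v ∈ gr e →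
      ∀ i : ℤ, YV u i v ∈ gr (d + e - i - 1))
    (hω : ω ∈ gr 2)
    -- `L(0)` eigenvalue property and the `L(-1)`-derivative property on `M` and on `V`
    (hL0 : ∀ (d : ℤ) (u : V), u ∈ gr d → YV ω 1 u = (d : ℂ) • u)
    (hL1der : ∀ (u : V) (i : ℤ) (w : M), Y (YV ω 0 u) i w = (-(i : ℂ)) • Y u (i - 1) w)
    (hL1derV : ∀ (u v : V) (i : ℤ), YV (YV ω 0 u) i v = (-(i : ℂ)) • YV u (i - 1) v)
    -- the Borcherds (Jacobi) identity for the module `M` and for `V` itself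
    (hB : ∀ (u v : V) (w : M) (p q r : ℤ),
      (∑ᶠ i : ℕ, zchoose p i • Y (YV u (r + i) v) (p + q - i) w)
        = (∑ᶠ i : ℕ, ((-1 : ℂ) ^ i * zchoose r i) • Y u (p + r - i) (Y v (q + i) w))
          - ∑ᶠ i : ℕ, ((-1 : ℂ) ^ i * zchoose r i * (-1 : ℂ) ^ r) •
              Y v (q + r - i) (Y u (p + i) w))
    (hBV : ∀ (u v x : V) (p q r : ℤ),
      (∑ᶠ i : ℕ, zchoose p i • YV (YV u (r + i) v) (p + q - i) x)
        = (∑ᶠ i : ℕ, ((-1 : ℂ) ^ i * zchoose r i) • YV u (p + r - i) (YV v (q + i) x))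
          - ∑ᶠ i : ℕ, ((-1 : ℂ) ^ i * zchoose r i * (-1 : ℂ) ^ r) •
              YV v (q + r - i) (YV u (p + i) x))
    (n : ℕ)
    (grM : ℤ → Submodule ℂ M)
    (hgrMneg : ∀ m : ℤ, m < 0 → grM m = ⊥)
    (hadm : ∀ (d m : ℤ) (v : V) (w : M), v ∈ gr d → w ∈ grM m →
      ∀ k : ℤ, Y v k w ∈ grM (m + d - k - 1))
    (hsum : ∀ w : M, w ∈ ⨆ m : ℤ, grM m) :
    ∀ m : ℕ, (m : ℤ) ≤ n →
      grM m ≤ Omegan Y gr n ∧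
      (∀ (d : ℤ) (v : V), v ∈ gr d → ∀ w ∈ grM m, Y v (d - 1) w ∈ grM m) := by
  intro m hm
  constructor
  · intro w hw d u hu k hk
    have h1 : Y u k w ∈ grM (m + d - k - 1) := hadm d m u w hu hw k
    have h2 : (m : ℤ) + d - k - 1 < 0 := by omega
    rw [hgrMneg _ h2, Submodule.mem_bot] at h1
    exact h1
  · intro d v hv w hw
    have h1 : Y v (d - 1) w ∈ grM (m + d - (d - 1) - 1) := hadm d m v w hv hw (d - 1)
    have h2 : (m : ℤ) + d - (d - 1) - 1 = m := by ring
    rwa [h2] at h1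
end
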